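/- Let d ≥ 1 and let ẽ be uniformly distributed on the unit l₁-ball B₁^d(1). Then E[‖ẽ‖₂] ≤ 2/√d. -/

import Mathlib

open MeasureTheory
open scoped ENNReal RealInnerProductSpace

noncomputable section

/-- The `l_p` norm on `EuclideanSpace ℝ (Fin d)` (with `p = ∞` giving the sup norm). -/
def lpNorm {d : ℕ} (p : ℝ≥0∞) (x : EuclideanSpace ℝ (Fin d)) : ℝ :=
  if p = ∞ then ⨆ i, |x i| else (∑ i, |x i| ^ p.toReal) ^ (1 / p.toReal)

/-- The unit `l₁`-ball `B₁^d(1)`. -/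
def l1Ball (d : ℕ) : Set (EuclideanSpace ℝ (Fin d)) := {u | ∑ i, |u i| ≤ 1}

/-- The Euclidean unit ball `B₂^d(1)`. -/
def l2Ball (d : ℕ) : Set (EuclideanSpace ℝ (Fin d)) := {u | ‖u‖ ≤ 1}

/-- The unit `l₁`-sphere `S₁^d(1)`. -/
def l1Sphere (d : ℕ) : Set (EuclideanSpace ℝ (Fin d)) := {u | ∑ i, |u i| = 1}

/-- The Euclidean unit sphere `S₂^d(1)`. -/
def l2Sphere (d : ℕ) : Set (EuclideanSpace ℝ (Fin d)) := {u | ‖u‖ = 1}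

/-- Uniform probability distribution on a solid body: normalized Lebesgue measure. -/
def uniformOn {d : ℕ} (S : Set (EuclideanSpace ℝ (Fin d))) :
    Measure (EuclideanSpace ℝ (Fin d)) :=
  (volume S)⁻¹ • volume.restrict S

/-- Uniform probability distribution on a hypersurface: normalized `(d-1)`-dimensional
Hausdorff measure. -/
def uniformOnSphere {d : ℕ} (S : Set (EuclideanSpace ℝ (Fin d))) :
    Measure (EuclideanSpace ℝ (Fin d)) :=
  (μH[(d : ℝ) - 1] S)⁻¹ • (μH[(d : ℝ) - 1]).restrict S

/-- Coordinatewise sign vector `sign(e)`. -/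
def signVec {d : ℕ} (e : EuclideanSpace ℝ (Fin d)) : EuclideanSpace ℝ (Fin d) :=
  (WithLp.equiv 2 (Fin d → ℝ)).symm (fun i => Real.sign (e i))

end


open MeasureTheory Real Set
open scoped ENNReal Nat


noncomputable section Aux19

/-- integrability of `f ∘ abs` from integrability on `Ioi 0`. -/
lemma aux19_integrable_comp_abs {f : ℝ → ℝ} (hf : IntegrableOn (fun x => f |x|) (Ioi 0)) :
    Integrable (fun x : ℝ => f |x|) := by
  have int_Iic : IntegrableOn (fun x ↦ f |x|) (Iic 0) := by
    rw [← Measure.map_neg_eq_self (volume : Measure ℝ)]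
    have m : MeasurableEmbedding fun x : ℝ => -x := (Homeomorph.neg ℝ).measurableEmbedding
    rw [m.integrableOn_map_iff]
    simp_rw [Function.comp_def, abs_neg, neg_preimage, neg_Iic, neg_zero]
    exact (integrableOn_Ici_iff_integrableOn_Ioi).mpr hf
  have := int_Iic.union hf
  rwa [Iic_union_Ioi, integrableOn_univ] at this

lemma aux19_int_Ioi_pow_exp (k : ℕ) :
    IntegrableOn (fun r : ℝ => Real.exp (-r) * r ^ k) (Ioi 0) := by
  have h := Real.GammaIntegral_convergent (s := (k : ℝ) + 1) (by positivity)
  have : (fun x : ℝ => Real.exp (-x) * x ^ (((k : ℝ) + 1) - 1)) =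
      fun x : ℝ => Real.exp (-x) * x ^ k := by
    funext x
    rw [add_sub_cancel_right, Real.rpow_natCast]
  rwa [this] at h

lemma aux19_integral_Ioi_pow_exp (k : ℕ) :
    ∫ r in Ioi (0:ℝ), Real.exp (-r) * r ^ k = (k ! : ℝ) := by
  have h := Real.Gamma_eq_integral (s := (k : ℝ) + 1) (by positivity)
  rw [Real.Gamma_nat_eq_factorial] at h
  rw [h]
  refine setIntegral_congr_fun measurableSet_Ioi fun x _ => ?_
  rw [add_sub_cancel_right, Real.rpow_natCast]

lemma aux19_gamma_lintegral (k : ℕ) :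
    ∫⁻ r in Ioi (0:ℝ), ENNReal.ofReal (Real.exp (-r) * r ^ k) =
      ENNReal.ofReal (k ! : ℝ) := by
  rw [← aux19_integral_Ioi_pow_exp k,
    ofReal_integral_eq_lintegral_ofReal (aux19_int_Ioi_pow_exp k)]
  filter_upwards [ae_restrict_mem measurableSet_Ioi] with r hr
  have : (0:ℝ) < r := hr
  positivity

lemma aux19_integrable_f1 : Integrable (fun t : ℝ => Real.exp (-|t|)) := by
  refine aux19_integrable_comp_abs (f := fun t => Real.exp (-t)) ?_
  have := aux19_int_Ioi_pow_exp 0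
  refine this.congr_fun (fun x hx => ?_) measurableSet_Ioi
  dsimp only; rw [abs_of_pos hx, pow_zero, mul_one]

lemma aux19_integral_f1 : ∫ t : ℝ, Real.exp (-|t|) = 2 := by
  rw [integral_comp_abs (f := fun t => Real.exp (-t)), integral_exp_neg_Ioi_zero]
  norm_num

lemma aux19_integrable_f2 : Integrable (fun t : ℝ => t ^ 2 * Real.exp (-|t|)) := by
  have : (fun t : ℝ => t ^ 2 * Real.exp (-|t|)) = fun t : ℝ => |t| ^ 2 * Real.exp (-|t|) := by
    funext t; rw [sq_abs]
  rw [this]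
  refine aux19_integrable_comp_abs (f := fun t => t ^ 2 * Real.exp (-t)) ?_
  have := aux19_int_Ioi_pow_exp 2
  refine this.congr_fun (fun x hx => ?_) measurableSet_Ioi
  rw [abs_of_pos hx]; ring

lemma aux19_integral_f2 : ∫ t : ℝ, t ^ 2 * Real.exp (-|t|) = 4 := by
  have : (fun t : ℝ => t ^ 2 * Real.exp (-|t|)) = fun t : ℝ => |t| ^ 2 * Real.exp (-|t|) := by
    funext t; rw [sq_abs]
  rw [this, integral_comp_abs (f := fun t => t ^ 2 * Real.exp (-t))]
  have : ∫ x in Ioi (0:ℝ), x ^ 2 * Real.exp (-x) = ∫ x in Ioi (0:ℝ), Real.exp (-x) * x ^ 2 := by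
    refine setIntegral_congr_fun measurableSet_Ioi fun x _ => by ring
  rw [this, aux19_integral_Ioi_pow_exp 2]
  norm_num [Nat.factorial]

end Aux19



noncomputable section Aux19B

variable {d : ℕ}

lemma aux19_contN : Continuous (fun x : Fin d → ℝ => ∑ i, |x i|) := by
  exact continuous_finset_sum _ fun i _ => (continuous_apply i).abs

lemma aux19_measN : Measurable (fun x : Fin d → ℝ => ∑ i, |x i|) :=
  aux19_contN.measurable

lemma aux19_N_nonneg (x : Fin d → ℝ) : 0 ≤ ∑ i, |x i| :=
  Finset.sum_nonneg fun i _ => abs_nonneg _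

lemma aux19_measSet (r : ℝ) : MeasurableSet {x : Fin d → ℝ | ∑ i, |x i| ≤ r} :=
  measurableSet_le aux19_measN measurable_const

/-- Layer-cake / Tonelli step. -/
lemma aux19_tonelli (F : (Fin d → ℝ) → ℝ≥0∞) (hF : Measurable F) :
    ∫⁻ x, F x * ENNReal.ofReal (Real.exp (-(∑ i, |x i|))) =
      ∫⁻ r in Ioi (0:ℝ), ENNReal.ofReal (Real.exp (-r)) *
        ∫⁻ x in {x : Fin d → ℝ | ∑ i, |x i| ≤ r}, F x := by
  set N : (Fin d → ℝ) → ℝ := fun x => ∑ i, |x i| with hN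
  set K : Set ((Fin d → ℝ) × ℝ) := {p | N p.1 ≤ p.2} with hKdef
  have hK : MeasurableSet K :=
    measurableSet_le (aux19_measN.comp measurable_fst) measurable_snd
  have hg : Measurable (fun p : (Fin d → ℝ) × ℝ => ENNReal.ofReal (Real.exp (-p.2))) :=
    (ENNReal.measurable_ofReal.comp ((Real.continuous_exp.measurable).comp
      measurable_snd.neg))
  -- key 1D identity
  have key : ∀ x : Fin d → ℝ, ENNReal.ofReal (Real.exp (-(N x))) =
      ∫⁻ r in Ioi (0:ℝ), K.indicator (fun p => ENNReal.ofReal (Real.exp (-p.2))) (x, r) := by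
    intro x
    have h1 : (fun r : ℝ => K.indicator (fun p => ENNReal.ofReal (Real.exp (-p.2))) (x, r)) =
        (Ici (N x)).indicator (fun r => ENNReal.ofReal (Real.exp (-r))) := by
      funext r
      by_cases h : N x ≤ r
      · rw [Set.indicator_of_mem (by exact h : (x, r) ∈ K),
          Set.indicator_of_mem (by exact h : r ∈ Ici (N x))]
      · rw [Set.indicator_of_notMem (by exact h : ¬ (x, r) ∈ K),
          Set.indicator_of_notMem (by exact h : ¬ r ∈ Ici (N x))]
    rw [h1, lintegral_indicator measurableSet_Ici, Measure.restrict_restrict measurableSet_Ici]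
    have h2 : (volume : Measure ℝ).restrict (Ici (N x) ∩ Ioi 0) =
        (volume : Measure ℝ).restrict (Ioi (N x)) := by
      rcases eq_or_lt_of_le (aux19_N_nonneg x) with h | h
      · have hx0 : N x = 0 := h.symm
        have : Ici (N x) ∩ Ioi (0:ℝ) = Ioi (N x) := by
          rw [hx0]
          exact Set.inter_eq_right.mpr (fun r (hr : (0:ℝ) < r) => le_of_lt hr)
        rw [this]
      · have : Ici (N x) ∩ Ioi (0:ℝ) = Ici (N x) := by
          refine Set.inter_eq_left.mpr (fun r hr => ?_)
          exact lt_of_lt_of_le h hr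
        rw [this, restrict_Ioi_eq_restrict_Ici]
    rw [h2, ← ofReal_integral_eq_lintegral_ofReal
        ((exp_neg_integrableOn_Ioi (N x) one_pos).congr_fun (fun r _ => by
          dsimp only; rw [neg_one_mul]) measurableSet_Ioi)
        (Filter.Eventually.of_forall fun r => (Real.exp_pos _).le),
      integral_exp_neg_Ioi]
  calc ∫⁻ x, F x * ENNReal.ofReal (Real.exp (-(N x)))
      = ∫⁻ x, ∫⁻ r in Ioi (0:ℝ),
          F x * K.indicator (fun p => ENNReal.ofReal (Real.exp (-p.2))) (x, r) := by
        refine lintegral_congr fun x => ?_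
        rw [key x, ← lintegral_const_mul _ ?_]
        exact (hg.indicator hK).comp measurable_prodMk_left
    _ = ∫⁻ r in Ioi (0:ℝ), ∫⁻ x,
          F x * K.indicator (fun p => ENNReal.ofReal (Real.exp (-p.2))) (x, r) := by
        refine lintegral_lintegral_swap ?_
        exact ((hF.comp measurable_fst).mul (hg.indicator hK)).aemeasurable
    _ = ∫⁻ r in Ioi (0:ℝ), ENNReal.ofReal (Real.exp (-r)) *
          ∫⁻ x in {x : Fin d → ℝ | N x ≤ r}, F x := by
        refine setLIntegral_congr_fun measurableSet_Ioi
          (fun r _ => ?_)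
        have h3 : (fun x : Fin d → ℝ =>
            F x * K.indicator (fun p => ENNReal.ofReal (Real.exp (-p.2))) (x, r)) =
            {x : Fin d → ℝ | N x ≤ r}.indicator
              (fun x => ENNReal.ofReal (Real.exp (-r)) * F x) := by
          funext x
          by_cases h : N x ≤ r
          · rw [Set.indicator_of_mem (by exact h : (x, r) ∈ K),
              Set.indicator_of_mem (by exact h), mul_comm]
          · rw [Set.indicator_of_notMem (by exact h : ¬ (x, r) ∈ K),
              Set.indicator_of_notMem (by exact h), mul_zero]
        rw [h3, lintegral_indicator (aux19_measSet r), lintegral_const_mul _ hF]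
end Aux19B



noncomputable section Aux19C
variable {d : ℕ}

lemma aux19_contN' : Continuous (fun x : Fin d → ℝ => ∑ i, |x i|) :=
  continuous_finset_sum _ fun i _ => (continuous_apply i).abs

/-- Scaling of set-lintegrals over `l1`-balls. -/
lemma aux19_scale (F : (Fin d → ℝ) → ℝ≥0∞) (hF : Measurable F) {r : ℝ} (hr : 0 < r) :
    ∫⁻ x in {x : Fin d → ℝ | ∑ i, |x i| ≤ r}, F x =
      ENNReal.ofReal (r ^ d) * ∫⁻ x in {x : Fin d → ℝ | ∑ i, |x i| ≤ 1}, F (r • x) := by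
  have measN : Measurable (fun x : Fin d → ℝ => ∑ i, |x i|) := aux19_contN'.measurable
  have measSet : ∀ s : ℝ, MeasurableSet {x : Fin d → ℝ | ∑ i, |x i| ≤ s} := fun s =>
    measurableSet_le measN measurable_const
  have hmap := Measure.map_addHaar_smul (volume : Measure (Fin d → ℝ)) hr.ne'
  rw [Module.finrank_fintype_fun_eq_card, Fintype.card_fin] at hmap
  have hvol : (volume : Measure (Fin d → ℝ)) =
      ENNReal.ofReal (r ^ d) • Measure.map (fun x : Fin d → ℝ => r • x) volume := by
    rw [hmap, smul_smul, abs_of_pos (by positivity : (0:ℝ) < (r ^ d)⁻¹),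
      ← ENNReal.ofReal_mul (by positivity), mul_inv_cancel₀ (by positivity : (r:ℝ) ^ d ≠ 0),
      ENNReal.ofReal_one, one_smul]
  have hG : Measurable ({x : Fin d → ℝ | ∑ i, |x i| ≤ r}.indicator F) :=
    hF.indicator (measSet r)
  calc ∫⁻ x in {x : Fin d → ℝ | ∑ i, |x i| ≤ r}, F x
      = ∫⁻ x, {x : Fin d → ℝ | ∑ i, |x i| ≤ r}.indicator F x := by
        rw [lintegral_indicator (measSet r)]
    _ = ENNReal.ofReal (r ^ d) *
          ∫⁻ x, {x : Fin d → ℝ | ∑ i, |x i| ≤ r}.indicator F (r • x) := by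
        conv_lhs => rw [hvol]
        rw [lintegral_smul_measure, lintegral_map hG (measurable_const_smul r), smul_eq_mul]
    _ = ENNReal.ofReal (r ^ d) * ∫⁻ x in {x : Fin d → ℝ | ∑ i, |x i| ≤ 1}, F (r • x) := by
        congr 1
        rw [← lintegral_indicator (measSet 1)]
        refine lintegral_congr fun x => ?_
        have hsum : ∑ i, |(r • x) i| = r * ∑ i, |x i| := by
          rw [Finset.mul_sum]
          refine Finset.sum_congr rfl fun i _ => ?_
          rw [Pi.smul_apply, smul_eq_mul, abs_mul, abs_of_pos hr]
        by_cases h : ∑ i, |x i| ≤ 1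
        · have hmem : r • x ∈ {x : Fin d → ℝ | ∑ i, |x i| ≤ r} := by
            show ∑ i, |(r • x) i| ≤ r
            rw [hsum]
            calc r * ∑ i, |x i| ≤ r * 1 := mul_le_mul_of_nonneg_left h hr.le
              _ = r := mul_one r
          rw [Set.indicator_of_mem hmem, Set.indicator_of_mem (by exact h)]
        · have hmem : r • x ∉ {x : Fin d → ℝ | ∑ i, |x i| ≤ r} := by
            show ¬ ∑ i, |(r • x) i| ≤ r
            rw [hsum]
            intro hc
            exact h (by nlinarith)
          rw [Set.indicator_of_notMem hmem, Set.indicator_of_notMem (by exact h)]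
end Aux19C


noncomputable section Aux19D
variable {d : ℕ}

lemma aux19_measQ : Measurable (fun x : Fin d → ℝ => ENNReal.ofReal (∑ i, x i ^ 2)) :=
  ENNReal.measurable_ofReal.comp
    (continuous_finset_sum _ fun i _ => ((continuous_apply i).pow 2)).measurable

lemma aux19_exp_prod (x : Fin d → ℝ) :
    Real.exp (-(∑ i, |x i|)) = ∏ i, Real.exp (-|x i|) := by
  rw [← Real.exp_sum, ← Finset.sum_neg_distrib]

lemma aux19_V :
    volume {x : Fin d → ℝ | ∑ i, |x i| ≤ 1} = ENNReal.ofReal (2 ^ d / d !) := by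
  set V := volume {x : Fin d → ℝ | ∑ i, |x i| ≤ 1} with hV
  have key : ENNReal.ofReal ((d ! : ℝ)) * V = ENNReal.ofReal ((2:ℝ) ^ d) := by
    have h1 := aux19_tonelli (d := d) (fun _ => 1) measurable_const
    have hL : ∫⁻ x : Fin d → ℝ, (1:ℝ≥0∞) * ENNReal.ofReal (Real.exp (-(∑ i, |x i|))) =
        ENNReal.ofReal ((2:ℝ) ^ d) := by
      simp_rw [one_mul]
      have hint : Integrable (fun x : Fin d → ℝ => Real.exp (-(∑ i, |x i|))) := by
        have : (fun x : Fin d → ℝ => Real.exp (-(∑ i, |x i|))) =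
            fun x => ∏ i, Real.exp (-|x i|) := funext aux19_exp_prod
        rw [this]
        exact Integrable.fintype_prod fun _ => aux19_integrable_f1
      rw [← ofReal_integral_eq_lintegral_ofReal hint
        (Filter.Eventually.of_forall fun x => (Real.exp_pos _).le)]
      congr 1
      have : (fun x : Fin d → ℝ => Real.exp (-(∑ i, |x i|))) =
          fun x => ∏ i, Real.exp (-|x i|) := funext aux19_exp_prod
      rw [this, integral_fintype_prod_volume_eq_pow (𝕜 := ℝ) (ι := Fin d) (fun t => Real.exp (-|t|)),
        aux19_integral_f1, Fintype.card_fin]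
    have hR : ∫⁻ r in Ioi (0:ℝ), ENNReal.ofReal (Real.exp (-r)) *
        ∫⁻ x in {x : Fin d → ℝ | ∑ i, |x i| ≤ r}, (1:ℝ≥0∞) =
        ENNReal.ofReal ((d ! : ℝ)) * V := by
      have hcongr : ∀ r ∈ Ioi (0:ℝ), ENNReal.ofReal (Real.exp (-r)) *
          ∫⁻ x in {x : Fin d → ℝ | ∑ i, |x i| ≤ r}, (1:ℝ≥0∞) =
          ENNReal.ofReal (Real.exp (-r) * r ^ d) * V := by
        intro r hr
        rw [aux19_scale (fun _ => 1) measurable_const hr]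
        simp_rw [setLIntegral_one]
        rw [← hV, ← mul_assoc, ← ENNReal.ofReal_mul (Real.exp_pos _).le]
      rw [setLIntegral_congr_fun measurableSet_Ioi
        hcongr,
        lintegral_mul_const _ (by fun_prop : Measurable fun r : ℝ =>
          ENNReal.ofReal (Real.exp (-r) * r ^ d)),
        aux19_gamma_lintegral d]
    rw [hL] at h1
    rw [h1, hR]
  have hd0 : (0:ℝ) < d ! := by positivity
  rw [ENNReal.ofReal_div_of_pos hd0,
    ENNReal.eq_div_iff (ENNReal.ofReal_pos.mpr hd0).ne' ENNReal.ofReal_ne_top,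
    key]

lemma aux19_A :
    ∫⁻ x in {x : Fin d → ℝ | ∑ i, |x i| ≤ 1}, ENNReal.ofReal (∑ i, x i ^ 2) =
      ENNReal.ofReal (d * 2 ^ (d + 1) / (d + 2)!) := by
  set A := ∫⁻ x in {x : Fin d → ℝ | ∑ i, |x i| ≤ 1}, ENNReal.ofReal (∑ i, x i ^ 2) with hA
  set f1 : ℝ → ℝ := fun t => Real.exp (-|t|) with hf1
  set f2 : ℝ → ℝ := fun t => t ^ 2 * Real.exp (-|t|) with hf2
  have hQnn : ∀ x : Fin d → ℝ, 0 ≤ ∑ i, x i ^ 2 := fun x =>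
    Finset.sum_nonneg fun i _ => sq_nonneg _
  have hsum : (fun x : Fin d → ℝ => (∑ i, x i ^ 2) * Real.exp (-(∑ i, |x i|))) =
      fun x => ∑ i, ∏ j, (if j = i then f2 else f1) (x j) := by
    funext x
    have hterm : ∀ i : Fin d, ∏ j, (if j = i then f2 else f1) (x j) =
        x i ^ 2 * Real.exp (-(∑ i, |x i|)) := by
      intro i
      have h1 : ∀ j : Fin d, (if j = i then f2 else f1) (x j) =
          (if j = i then x j ^ 2 else 1) * Real.exp (-|x j|) := by
        intro j
        by_cases h : j = i <;> simp [h, hf1, hf2]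
      calc ∏ j, (if j = i then f2 else f1) (x j)
          = ∏ j, ((if j = i then x j ^ 2 else 1) * Real.exp (-|x j|)) :=
            Finset.prod_congr rfl fun j _ => h1 j
        _ = (∏ j, if j = i then x j ^ 2 else 1) * ∏ j, Real.exp (-|x j|) :=
            Finset.prod_mul_distrib
        _ = x i ^ 2 * Real.exp (-(∑ i, |x i|)) := by
            rw [Finset.prod_ite_eq' Finset.univ i (fun j => x j ^ 2),
              if_pos (Finset.mem_univ i), aux19_exp_prod]
    rw [Finset.sum_congr rfl fun i _ => hterm i, ← Finset.sum_mul]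
  have hint_i : ∀ i : Fin d,
      Integrable (fun x : Fin d → ℝ => ∏ j, (if j = i then f2 else f1) (x j)) := by
    intro i
    refine Integrable.fintype_prod fun j => ?_
    by_cases h : j = i
    · rw [if_pos h]; exact aux19_integrable_f2
    · rw [if_neg h]; exact aux19_integrable_f1
  have hint : Integrable (fun x : Fin d → ℝ =>
      (∑ i, x i ^ 2) * Real.exp (-(∑ i, |x i|))) := by
    rw [hsum]
    exact integrable_finset_sum _ fun i _ => hint_i i
  have hval : ∫ x : Fin d → ℝ, (∑ i, x i ^ 2) * Real.exp (-(∑ i, |x i|)) =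
      d * 2 ^ (d + 1) := by
    rw [hsum, integral_finset_sum _ fun i _ => hint_i i]
    have hterm : ∀ i : Fin d,
        ∫ x : Fin d → ℝ, ∏ j, (if j = i then f2 else f1) (x j) = 2 ^ (d + 1) := by
      intro i
      rw [integral_fintype_prod_volume_eq_prod (𝕜 := ℝ) (ι := Fin d) (fun j t => (if j = i then f2 else f1) t)]
      have : ∀ j : Fin d, ∫ t : ℝ, (if j = i then f2 else f1) t =
          (if j = i then 2 else 1) * 2 := by
        intro j
        by_cases h : j = i
        · rw [if_pos h, if_pos h, hf2, aux19_integral_f2]; norm_num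
        · rw [if_neg h, if_neg h, hf1, aux19_integral_f1]; norm_num
      rw [Finset.prod_congr rfl fun j _ => this j, Finset.prod_mul_distrib,
        Finset.prod_ite_eq' Finset.univ i (fun _ => (2:ℝ)), if_pos (Finset.mem_univ i),
        Finset.prod_const, Finset.card_univ, Fintype.card_fin]
      ring
    rw [Finset.sum_congr rfl fun i _ => hterm i, Finset.sum_const, Finset.card_univ,
      Fintype.card_fin, nsmul_eq_mul]
  -- lintegral version of LHS
  have hL : ∫⁻ x : Fin d → ℝ, ENNReal.ofReal (∑ i, x i ^ 2) *
      ENNReal.ofReal (Real.exp (-(∑ i, |x i|))) =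
      ENNReal.ofReal (d * 2 ^ (d + 1)) := by
    have : ∀ x : Fin d → ℝ, ENNReal.ofReal (∑ i, x i ^ 2) *
        ENNReal.ofReal (Real.exp (-(∑ i, |x i|))) =
        ENNReal.ofReal ((∑ i, x i ^ 2) * Real.exp (-(∑ i, |x i|))) := fun x =>
      (ENNReal.ofReal_mul (hQnn x)).symm
    rw [lintegral_congr this, ← ofReal_integral_eq_lintegral_ofReal hint
      (Filter.Eventually.of_forall fun x => mul_nonneg (hQnn x) (Real.exp_pos _).le), hval]
  have key : ENNReal.ofReal (((d+2)! : ℝ)) * A = ENNReal.ofReal ((d : ℝ) * 2 ^ (d + 1)) := by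
    have h1 := aux19_tonelli (d := d) (fun x => ENNReal.ofReal (∑ i, x i ^ 2)) aux19_measQ
    rw [hL] at h1
    rw [h1]
    have hcongr : ∀ r ∈ Ioi (0:ℝ), ENNReal.ofReal (Real.exp (-r)) *
        ∫⁻ x in {x : Fin d → ℝ | ∑ i, |x i| ≤ r}, ENNReal.ofReal (∑ i, x i ^ 2) =
        ENNReal.ofReal (Real.exp (-r) * r ^ (d + 2)) * A := by
      intro r hr
      have hrpos : (0:ℝ) < r := hr
      rw [aux19_scale (fun x => ENNReal.ofReal (∑ i, x i ^ 2)) aux19_measQ hrpos]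
      have : ∀ x : Fin d → ℝ, ENNReal.ofReal (∑ i, (r • x) i ^ 2) =
          ENNReal.ofReal (r ^ 2) * ENNReal.ofReal (∑ i, x i ^ 2) := by
        intro x
        rw [← ENNReal.ofReal_mul (by positivity), Finset.mul_sum]
        congr 1
        refine Finset.sum_congr rfl fun i _ => ?_
        rw [Pi.smul_apply, smul_eq_mul]; ring
      rw [lintegral_congr this, lintegral_const_mul _ aux19_measQ, ← hA, ← mul_assoc,
        ← mul_assoc, ← ENNReal.ofReal_mul (Real.exp_pos _).le,
        ← ENNReal.ofReal_mul (by positivity),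
        show Real.exp (-r) * r ^ d * r ^ 2 = Real.exp (-r) * r ^ (d + 2) by ring]
    rw [setLIntegral_congr_fun measurableSet_Ioi hcongr,
      lintegral_mul_const _ (by fun_prop : Measurable fun r : ℝ =>
        ENNReal.ofReal (Real.exp (-r) * r ^ (d + 2))),
      aux19_gamma_lintegral (d + 2)]
  have hd0 : (0:ℝ) < ((d+2)! : ℝ) := by positivity
  have hgoal : ENNReal.ofReal ((d:ℝ) * 2 ^ (d + 1) / ((d+2)! : ℝ)) =
      ENNReal.ofReal ((d:ℝ) * 2 ^ (d + 1)) / ENNReal.ofReal (((d+2)! : ℝ)) :=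
    ENNReal.ofReal_div_of_pos hd0
  push_cast at hgoal ⊢
  push_cast at key
  rw [hgoal, ENNReal.eq_div_iff (ENNReal.ofReal_pos.mpr hd0).ne'
    ENNReal.ofReal_ne_top, key]
end Aux19D

noncomputable section Aux19E
variable {d : ℕ}

lemma aux19_norm_sq (x : EuclideanSpace ℝ (Fin d)) : ‖x‖ ^ 2 = ∑ i, x i ^ 2 := by
  rw [EuclideanSpace.norm_eq, Real.sq_sqrt (Finset.sum_nonneg fun i _ => by positivity)]
  exact Finset.sum_congr rfl fun i _ => by rw [Real.norm_eq_abs, sq_abs]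

lemma aux19_norm_le_sum (x : EuclideanSpace ℝ (Fin d)) : ‖x‖ ≤ ∑ i, |x i| := by
  have h1 : ‖x‖ ^ 2 ≤ (∑ i, |x i|) ^ 2 := by
    rw [aux19_norm_sq]
    have : ∀ i : Fin d, x i ^ 2 = |x i| ^ 2 := fun i => (sq_abs _).symm
    rw [Finset.sum_congr rfl fun i _ => this i]
    exact Finset.sum_sq_le_sq_sum_of_nonneg fun i _ => abs_nonneg _
  have h2 : (0:ℝ) ≤ ∑ i, |x i| := Finset.sum_nonneg fun i _ => abs_nonneg _
  nlinarith [norm_nonneg x]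

lemma aux19_meas_l1Ball : MeasurableSet (l1Ball d) := by
  have : Continuous (fun u : EuclideanSpace ℝ (Fin d) => ∑ i, |u i|) :=
    continuous_finset_sum _ fun i _ =>
      ((continuous_apply i).comp (PiLp.continuous_ofLp _ _)).abs
  exact measurableSet_le this.measurable measurable_const

lemma aux19_V_euc :
    volume (l1Ball d) = ENNReal.ofReal (2 ^ d / d !) := by
  have hφ := EuclideanSpace.volume_preserving_symm_measurableEquiv_toLp (Fin d)
  have hpre : l1Ball d =
      (MeasurableEquiv.toLp 2 (Fin d → ℝ)).symm ⁻¹' {x : Fin d → ℝ | ∑ i, |x i| ≤ 1} := rfl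
  rw [hpre, hφ.measure_preimage
    (measurableSet_le (by fun_prop) measurable_const).nullMeasurableSet, aux19_V]

lemma aux19_A_euc :
    ∫⁻ x in l1Ball d, ENNReal.ofReal (‖x‖ ^ 2) =
      ENNReal.ofReal (d * 2 ^ (d + 1) / (d + 2)!) := by
  have hφ := EuclideanSpace.volume_preserving_symm_measurableEquiv_toLp (Fin d)
  have hpre : l1Ball d =
      (MeasurableEquiv.toLp 2 (Fin d → ℝ)).symm ⁻¹' {x : Fin d → ℝ | ∑ i, |x i| ≤ 1} := rfl
  have hcongr : ∀ x : EuclideanSpace ℝ (Fin d), ENNReal.ofReal (‖x‖ ^ 2) =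
      ENNReal.ofReal (∑ i, ((MeasurableEquiv.toLp 2 (Fin d → ℝ)).symm x) i ^ 2) := by
    intro x
    rw [aux19_norm_sq]
    rfl
  rw [lintegral_congr hcongr, hpre,
    hφ.setLIntegral_comp_preimage_emb (MeasurableEquiv.toLp 2 (Fin d → ℝ)).symm.measurableEmbedding
      (fun y => ENNReal.ofReal (∑ i, y i ^ 2)) {x : Fin d → ℝ | ∑ i, |x i| ≤ 1},
    aux19_A]
end Aux19E


/-- For `ẽ` uniformly distributed on the unit `l₁`-ball,
`E[‖ẽ‖₂] ≤ 2/√d`. -/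
theorem l1_ball_l2_norm_expectation {d : ℕ} (hd : 1 ≤ d) :
    ∫ e, ‖e‖ ∂(uniformOn (l1Ball d)) ≤ 2 / Real.sqrt d := by
  set μ := uniformOn (l1Ball d) with hμ
  set v : ℝ := 2 ^ d / d ! with hv
  set a : ℝ := d * 2 ^ (d + 1) / (d + 2)! with ha
  have hvpos : 0 < v := by positivity
  have hapos : 0 ≤ a := by positivity
  have hdpos : (0:ℝ) < d := by exact_mod_cast hd
  -- probability measure
  have hprob : IsProbabilityMeasure μ := by
    constructor
    rw [hμ, uniformOn, Measure.smul_apply, Measure.restrict_apply_univ, aux19_V_euc,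
      smul_eq_mul, ← hv, ENNReal.inv_mul_cancel (ENNReal.ofReal_pos.mpr hvpos).ne'
      ENNReal.ofReal_ne_top]
  haveI := hprob
  -- second moment
  have hI2 : ∫ x, ‖x‖ ^ 2 ∂μ = v⁻¹ * a := by
    rw [hμ, uniformOn, integral_smul_measure, aux19_V_euc, ← hv,
      integral_eq_lintegral_of_nonneg_ae (f := fun x => ‖x‖ ^ 2)
        (Filter.Eventually.of_forall fun x => (by positivity : (0:ℝ) ≤ ‖x‖ ^ 2))
        ((continuous_norm.pow 2).aestronglyMeasurable)]
    have : ∫⁻ x, ENNReal.ofReal (‖x‖ ^ 2) ∂(volume.restrict (l1Ball d)) =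
        ENNReal.ofReal a := aux19_A_euc
    rw [this, ENNReal.toReal_ofReal hapos, smul_eq_mul, ENNReal.toReal_inv,
      ENNReal.toReal_ofReal hvpos.le]
  -- ratio bound
  have hfac : ((d+2)! : ℝ) = (d + 2) * ((d + 1) * d !) := by
    rw [show d + 2 = (d + 1) + 1 by ring, Nat.factorial_succ, Nat.factorial_succ]
    push_cast
    ring
  have hratio : v⁻¹ * a ≤ 2 / d := by
    have h2d : (0:ℝ) < (2:ℝ) ^ d := by positivity
    have hdf : (0:ℝ) < (d ! : ℝ) := by positivity
    have hval : v⁻¹ * a = 2 * d / ((d + 1) * (d + 2)) := by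
      rw [hv, ha, hfac, inv_div]
      rw [pow_succ]
      field_simp
    rw [hval, div_le_div_iff₀ (by positivity) hdpos]
    nlinarith [hdpos]
  -- a.e. bound for the norm
  have hae : ∀ᵐ x ∂μ, x ∈ l1Ball d := by
    rw [ae_iff]
    have : {x : EuclideanSpace ℝ (Fin d) | ¬ x ∈ l1Ball d} = (l1Ball d)ᶜ := rfl
    rw [this, hμ, uniformOn, Measure.smul_apply,
      Measure.restrict_apply aux19_meas_l1Ball.compl, compl_inter_self, measure_empty,
      smul_eq_mul, mul_zero]
  have hXbdd : ∀ᵐ x ∂μ, ‖‖x‖‖ ≤ 1 := by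
    filter_upwards [hae] with x hx
    rw [norm_norm]
    exact le_trans (aux19_norm_le_sum x) hx
  have hmem : MemLp (fun x : EuclideanSpace ℝ (Fin d) => ‖x‖) 2 μ :=
    MemLp.of_bound continuous_norm.aestronglyMeasurable 1 hXbdd
  have hvar := ProbabilityTheory.variance_nonneg (fun x : EuclideanSpace ℝ (Fin d) => ‖x‖) μ
  rw [ProbabilityTheory.variance_eq_sub hmem] at hvar
  have hsq : (∫ x, ‖x‖ ∂μ) ^ 2 ≤ ∫ x, ‖x‖ ^ 2 ∂μ := by
    have h1 : ∫ x, ((fun x : EuclideanSpace ℝ (Fin d) => ‖x‖) ^ 2) x ∂μ =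
        ∫ x, ‖x‖ ^ 2 ∂μ := by
      refine integral_congr_ae (Filter.Eventually.of_forall fun x => ?_)
      simp [Pi.pow_apply]
    rw [h1] at hvar
    linarith
  have hint_nonneg : 0 ≤ ∫ x, ‖x‖ ∂μ := integral_nonneg fun x => norm_nonneg x
  have hfinal : (∫ x, ‖x‖ ∂μ) ^ 2 ≤ 2 / d := by
    calc (∫ x, ‖x‖ ∂μ) ^ 2 ≤ ∫ x, ‖x‖ ^ 2 ∂μ := hsq
      _ = v⁻¹ * a := hI2
      _ ≤ 2 / d := hratio
  have hle : ∫ x, ‖x‖ ∂μ ≤ Real.sqrt (2 / d) := by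
    rw [Real.le_sqrt hint_nonneg (by positivity)]
    exact hfinal
  have hsqrt2 : Real.sqrt 2 ≤ 2 := by
    nlinarith [Real.sq_sqrt (by norm_num : (0:ℝ) ≤ 2), Real.sqrt_nonneg 2]
  calc ∫ x, ‖x‖ ∂μ ≤ Real.sqrt (2 / d) := hle
    _ = Real.sqrt 2 / Real.sqrt d := Real.sqrt_div (by norm_num) _
    _ ≤ 2 / Real.sqrt d := by
      gcongr
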